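/- Assume the density ratio model (G_0, …, G_m Borel probability measures on ℝ; q : ℝ → ℝ^d Borel measurable with first component q_1 ≡ 1; θ_0 = 0, θ_1, …, θ_m ∈ ℝ^d; G_k with density exp(θ_kᵀ q(·)) with respect to G_0; h = Σ_k ρ_k exp(θ_kᵀ q), h_k = ρ_k exp(θ_kᵀ q)/h; Ḡ = Σ_k ρ_k G_k; ∫ ‖q‖² dḠ < ∞). Let n_0, …, n_m be positive integers, n = Σ n_k, ρ_k = n_k/n, and let {X_{kj} : 0 ≤ k ≤ m, 1 ≤ j ≤ n_k} be independent with X_{kj} ~ G_k. Define Z_n ∈ ℝ^{md} as the block vector whose rth block (1 ≤ r ≤ m) is Z_{n,r} = Σ_{k,j} [δ_{kr} − h_r(X_{kj})] q(X_{kj}). Let W have blocks W_{rs} = ∫ (δ_{rs} h_r − h_r h_s) q qᵀ dḠ and let B_k ∈ ℝ^{md} have sth block ∫ (δ_{ks} h_k − h_k h_s) q dḠ. Then E[Z_n] = 0 and the covariance matrix of Z_n equals n (W − Σ_{k=0}^m ρ_k^{-1} B_k B_kᵀ); if moreover W is invertible, this equals n (W − W S W), where S has (r,s) block (ρ_r^{-1}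 δ_{rs} + ρ_0^{-1}) e_1 e_1ᵀ with e_1 = (1,0,…,0)ᵀ ∈ ℝ^d. -/

import Mathlib

open MeasureTheory ProbabilityTheory

/-- the empirical-likelihood score
`Z_{n,r} = Σ_{k,j} [δ_{k,r} - h_r(X_{kj})] q(X_{kj})` (blocks `1 ≤ r ≤ m`) has mean zero
and covariance matrix `n (W - Σ_k ρ_k⁻¹ B_k B_kᵀ)`, which equals `n (W - W S W)` when `W`
is invertible. -/
theorem drm_score_mean_and_covariance (m d : ℕ) (hm : 1 ≤ m) (hd : 1 ≤ d)
    (G : Fin (m + 1) → Measure ℝ) [∀ k, IsProbabilityMeasure (G k)]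
    (q : ℝ → Fin d → ℝ) (hq : Measurable q)
    (hq1 : ∀ t, q t ⟨0, hd⟩ = 1)
    (θ : Fin (m + 1) → Fin d → ℝ) (hθ0 : θ 0 = 0)
    (hG : ∀ k, G k =
      (G 0).withDensity fun t => ENNReal.ofReal (Real.exp (∑ i, θ k i * q t i)))
    (n : Fin (m + 1) → ℕ) (hn : ∀ k, 0 < n k)
    (ρ : Fin (m + 1) → ℝ) (hρ : ∀ k, ρ k = (n k : ℝ) / ∑ k', (n k' : ℝ))
    (hfun : Fin (m + 1) → ℝ → ℝ)
    (hhfun : ∀ k t, hfun k t =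
      ρ k * Real.exp (∑ i, θ k i * q t i) /
        ∑ k', ρ k' * Real.exp (∑ i, θ k' i * q t i))
    (Gbar : Measure ℝ) (hGbar : Gbar = ∑ k, ENNReal.ofReal (ρ k) • G k)
    (hq2int : Integrable (fun t => ∑ i, (q t i) ^ 2) Gbar)
    {Ω : Type} [MeasurableSpace Ω] (P : Measure Ω) [IsProbabilityMeasure P]
    (X : (k : Fin (m + 1)) → Fin (n k) → Ω → ℝ)
    (hXmeas : ∀ k j, Measurable (X k j))
    (hXlaw : ∀ k j, Measure.map (X k j) P = G k)
    (hXindep : iIndepFun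
      (fun kj : Σ k : Fin (m + 1), Fin (n k) => X kj.1 kj.2) P)
    (Z : Ω → Fin m × Fin d → ℝ)
    (hZ : ∀ (ω : Ω) (r : Fin m) (i : Fin d), Z ω (r, i) =
      ∑ k, ∑ j, ((if k = r.succ then 1 else 0) - hfun r.succ (X k j ω)) * q (X k j ω) i)
    (W : Matrix (Fin m × Fin d) (Fin m × Fin d) ℝ)
    (hW : ∀ (r s : Fin m) (i j : Fin d), W (r, i) (s, j) =
      ∫ t, ((if r = s then hfun r.succ t else 0) - hfun r.succ t * hfun s.succ t) *
        (q t i * q t j) ∂Gbar)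
    (B : Fin (m + 1) → Fin m × Fin d → ℝ)
    (hB : ∀ (k : Fin (m + 1)) (s : Fin m) (i : Fin d), B k (s, i) =
      ∫ t, ((if k = s.succ then hfun k t else 0) - hfun k t * hfun s.succ t) * q t i ∂Gbar)
    (S : Matrix (Fin m × Fin d) (Fin m × Fin d) ℝ)
    (hS : ∀ (r s : Fin m) (i j : Fin d), S (r, i) (s, j) =
      ((ρ r.succ)⁻¹ * (if r = s then 1 else 0) + (ρ 0)⁻¹) *
        ((if i = (⟨0, hd⟩ : Fin d) then (1 : ℝ) else 0) *
          (if j = (⟨0, hd⟩ : Fin d) then (1 : ℝ) else 0))) :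
    (∀ a : Fin m × Fin d, ∫ ω, Z ω a ∂P = 0) ∧
    (∀ a b : Fin m × Fin d,
      (∫ ω, Z ω a * Z ω b ∂P) - (∫ ω, Z ω a ∂P) * (∫ ω, Z ω b ∂P) =
        (∑ k', (n k' : ℝ)) * (W - ∑ k, (ρ k)⁻¹ • Matrix.vecMulVec (B k) (B k)) a b) ∧
    (IsUnit W.det → ∀ a b : Fin m × Fin d,
      (∫ ω, Z ω a * Z ω b ∂P) - (∫ ω, Z ω a ∂P) * (∫ ω, Z ω b ∂P) =
        (∑ k', (n k' : ℝ)) * (W - W * S * W) a b) := by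
  classical
  -- basic positivity facts
  set N : ℝ := ∑ k', (n k' : ℝ) with hNdef
  have hNpos : 0 < N := by
    refine Finset.sum_pos (fun k _ => ?_) ⟨0, Finset.mem_univ 0⟩
    exact_mod_cast hn k
  have hρpos : ∀ k, 0 < ρ k := fun k => by
    rw [hρ k]; exact div_pos (by exact_mod_cast hn k) hNpos
  have hnN : ∀ k, (n k : ℝ) = N * ρ k := fun k => by
    rw [hρ k]; field_simp
  -- the exponential factors and the denominator
  set Ex : Fin (m + 1) → ℝ → ℝ := fun k t => Real.exp (∑ i, θ k i * q t i) with hExdef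
  have hqi : ∀ i, Measurable fun t => q t i := fun i => (measurable_pi_apply i).comp hq
  have hExmeas : ∀ k, Measurable (Ex k) := fun k =>
    (Finset.measurable_sum Finset.univ fun i _ => (hqi i).const_mul (θ k i)).exp
  have hExpos : ∀ k t, 0 < Ex k t := fun k t => Real.exp_pos _
  set den : ℝ → ℝ := fun t => ∑ k', ρ k' * Ex k' t with hdendef
  have hdenmeas : Measurable den :=
    Finset.measurable_sum Finset.univ fun k _ => (hExmeas k).const_mul (ρ k)
  have hdenpos : ∀ t, 0 < den t := fun t =>
    Finset.sum_pos (fun k _ => mul_pos (hρpos k) (hExpos k t)) ⟨0, Finset.mem_univ 0⟩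
  have hh : ∀ k t, hfun k t = ρ k * Ex k t / den t := hhfun
  have hhmeas : ∀ k, Measurable (hfun k) := fun k => by
    have : hfun k = fun t => ρ k * Ex k t / den t := funext fun t => hh k t
    rw [this]; exact ((hExmeas k).const_mul (ρ k)).div hdenmeas
  have hhnonneg : ∀ k t, 0 ≤ hfun k t := fun k t => by
    rw [hh]
    exact div_nonneg (mul_nonneg (hρpos k).le (hExpos k t).le) (hdenpos t).le
  have hhsum : ∀ t, ∑ k, hfun k t = 1 := fun t => by
    simp only [hh]; rw [← Finset.sum_div, div_eq_one_iff_eq (hdenpos t).ne']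
  have hhle : ∀ k t, hfun k t ≤ 1 := fun k t => by
    rw [← hhsum t]
    exact Finset.single_le_sum (fun k' _ => hhnonneg k' t) (Finset.mem_univ k)
  have hhmul : ∀ k t, hfun k t * den t = ρ k * Ex k t := fun k t => by
    rw [hh, div_mul_cancel₀ _ (hdenpos t).ne']
  -- the dominating function Q
  set Qf : ℝ → ℝ := fun t => ∑ i, q t i ^ 2 with hQfdef
  have hQmeas : Measurable Qf :=
    Finset.measurable_sum Finset.univ fun i _ => (hqi i).pow_const 2
  have hsqle : ∀ t i, q t i ^ 2 ≤ Qf t := fun t i => by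
    simp only [hQfdef]
    exact Finset.single_le_sum (fun i' _ => sq_nonneg (q t i')) (Finset.mem_univ i)
  have hQnonneg : ∀ t, 0 ≤ Qf t := fun t => Finset.sum_nonneg fun i _ => sq_nonneg _
  have habs2 : ∀ t i j, |q t i * q t j| ≤ Qf t := fun t i j => by
    have h1 := hsqle t i; have h2 := hsqle t j
    rw [abs_mul]
    nlinarith [abs_nonneg (q t i), abs_nonneg (q t j), sq_abs (q t i), sq_abs (q t j),
      sq_nonneg (|q t i| - |q t j|)]
  have habs1 : ∀ t i, |q t i| ≤ Qf t := fun t i => by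
    have := habs2 t i ⟨0, hd⟩; rwa [hq1 t, mul_one] at this
  -- transfer integrals through withDensity
  have trans : ∀ f : ℝ → ℝ, Measurable f → (∀ t, 0 ≤ f t) → ∀ g : ℝ → ℝ,
      ∫ t, g t ∂((G 0).withDensity fun t => ENNReal.ofReal (f t)) =
        ∫ t, f t * g t ∂(G 0) := by
    intro f hf hf0 g
    have h1 : (fun t => ENNReal.ofReal (f t)) = fun t => ((f t).toNNReal : ENNReal) := rfl
    rw [h1, integral_withDensity_eq_integral_smul hf.real_toNNReal g]
    refine integral_congr_ae (Filter.Eventually.of_forall fun t => ?_)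
    simp [NNReal.smul_def, Real.coe_toNNReal _ (hf0 t)]
  have transInt : ∀ f : ℝ → ℝ, Measurable f → (∀ t, 0 ≤ f t) → ∀ g : ℝ → ℝ,
      (Integrable g ((G 0).withDensity fun t => ENNReal.ofReal (f t)) ↔
        Integrable (fun t => f t * g t) (G 0)) := by
    intro f hf hf0 g
    have h1 : (fun t => ENNReal.ofReal (f t)) = fun t => ((f t).toNNReal : ENNReal) := rfl
    rw [h1, integrable_withDensity_iff_integrable_smul hf.real_toNNReal]
    constructor <;> intro h <;>
      refine h.congr (Filter.Eventually.of_forall fun t => ?_) <;>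
      simp [NNReal.smul_def, Real.coe_toNNReal _ (hf0 t)]
  have hGbar' : Gbar = (G 0).withDensity fun t => ENNReal.ofReal (den t) := by
    rw [hGbar]
    have h2 : ∀ k : Fin (m + 1), ENNReal.ofReal (ρ k) • G k
        = (G 0).withDensity fun t => ENNReal.ofReal (ρ k) * ENNReal.ofReal (Ex k t) := by
      intro k
      rw [hG k]
      rw [show (fun t => ENNReal.ofReal (ρ k) * ENNReal.ofReal (Ex k t))
          = (ENNReal.ofReal (ρ k) • fun t => ENNReal.ofReal (Ex k t)) from rfl]
      rw [withDensity_smul' _ _ ENNReal.ofReal_ne_top]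
    simp_rw [h2]
    have h3 : ∀ s : Finset (Fin (m + 1)),
        (∑ k ∈ s, (G 0).withDensity fun t => ENNReal.ofReal (ρ k) * ENNReal.ofReal (Ex k t))
        = (G 0).withDensity fun t => ∑ k ∈ s, ENNReal.ofReal (ρ k) * ENNReal.ofReal (Ex k t) := by
      intro s
      induction s using Finset.induction_on with
      | empty => simp
      | insert a s' hx ih =>
        rw [Finset.sum_insert hx, ih]
        rw [show (fun t => ∑ k ∈ insert a s', ENNReal.ofReal (ρ k) * ENNReal.ofReal (Ex k t))
          = (fun t => ENNReal.ofReal (ρ a) * ENNReal.ofReal (Ex a t)) +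
            fun t => ∑ k ∈ s', ENNReal.ofReal (ρ k) * ENNReal.ofReal (Ex k t) by
            funext t; simp [Finset.sum_insert hx]]
        rw [withDensity_add_left]
        exact (measurable_const.mul ((hExmeas a).ennreal_ofReal))
    rw [h3]
    congr 1
    funext t
    rw [show (∑ k : Fin (m + 1), ENNReal.ofReal (ρ k) * ENNReal.ofReal (Ex k t))
        = ∑ k, ENNReal.ofReal (ρ k * Ex k t) from
        Finset.sum_congr rfl fun k _ => (ENNReal.ofReal_mul (hρpos k).le).symm,
      ← ENNReal.ofReal_sum_of_nonneg fun k _ => (mul_pos (hρpos k) (hExpos k t)).le]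
  have hGk' : ∀ k, G k = (G 0).withDensity fun t => ENNReal.ofReal (Ex k t) := hG
  -- the key change-of-measure identity
  have key : ∀ (k : Fin (m + 1)) (g : ℝ → ℝ), Measurable g →
      ∫ t, hfun k t * g t ∂Gbar = ρ k * ∫ t, g t ∂(G k) := by
    intro k g hg
    rw [hGbar', trans den hdenmeas (fun t => (hdenpos t).le), hGk' k,
      trans (Ex k) (hExmeas k) (fun t => (hExpos k t).le), ← integral_const_mul]
    refine integral_congr_ae (Filter.Eventually.of_forall fun t => ?_)
    have := hhmul k t
    calc den t * (hfun k t * g t) = hfun k t * den t * g t := by ring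
      _ = ρ k * (Ex k t * g t) := by rw [this]; ring
  -- integrability of Q under each measure
  have hQGbar : Integrable Qf Gbar := hq2int
  have hQG0 : Integrable (fun t => den t * Qf t) (G 0) := by
    rw [← transInt den hdenmeas (fun t => (hdenpos t).le), ← hGbar']; exact hQGbar
  have hQGk : ∀ k, Integrable Qf (G k) := by
    intro k
    rw [hGk' k, transInt (Ex k) (hExmeas k) (fun t => (hExpos k t).le)]
    refine (hQG0.const_mul (ρ k)⁻¹).mono
      ((hExmeas k).mul hQmeas).aestronglyMeasurable
      (Filter.Eventually.of_forall fun t => ?_)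
    have hle : ρ k * Ex k t ≤ den t :=
      Finset.single_le_sum (fun k' _ => (mul_pos (hρpos k') (hExpos k' t)).le)
        (Finset.mem_univ k)
    rw [Real.norm_eq_abs, Real.norm_eq_abs,
      abs_of_nonneg (mul_nonneg (hExpos k t).le (hQnonneg t)),
      abs_of_nonneg (mul_nonneg (inv_nonneg.2 (hρpos k).le)
        (mul_nonneg (hdenpos t).le (hQnonneg t)))]
    have h2 : Ex k t * Qf t = (ρ k)⁻¹ * (ρ k * Ex k t * Qf t) := by
      rw [eq_comm, inv_mul_eq_div, div_eq_iff (hρpos k).ne']; ring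
    rw [h2]
    exact mul_le_mul_of_nonneg_left
      (mul_le_mul_of_nonneg_right hle (hQnonneg t)) (inv_nonneg.2 (hρpos k).le)
  have domGk : ∀ (k) (g : ℝ → ℝ), Measurable g → (∀ t, |g t| ≤ Qf t) →
      Integrable g (G k) := fun k g hg hb =>
    (hQGk k).mono hg.aestronglyMeasurable (Filter.Eventually.of_forall fun t => by
      rw [Real.norm_eq_abs, Real.norm_eq_abs, abs_of_nonneg (hQnonneg t)]; exact hb t)
  have domGbar : ∀ g : ℝ → ℝ, Measurable g → (∀ t, |g t| ≤ Qf t) →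
      Integrable g Gbar := fun g hg hb =>
    hQGbar.mono hg.aestronglyMeasurable (Filter.Eventually.of_forall fun t => by
      rw [Real.norm_eq_abs, Real.norm_eq_abs, abs_of_nonneg (hQnonneg t)]; exact hb t)
  -- the summand functions
  set F : Fin m × Fin d → Fin (m + 1) → ℝ → ℝ :=
    fun a k t => ((if k = a.1.succ then 1 else 0) - hfun a.1.succ t) * q t a.2 with hFdef
  have hFmeas : ∀ a k, Measurable (F a k) := fun a k => by
    simp only [hFdef]
    exact (measurable_const.sub (hhmeas a.1.succ)).mul (hqi a.2)
  have hdelta : ∀ (k : Fin (m + 1)) (r : Fin m) (t : ℝ),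
      |(if k = r.succ then (1 : ℝ) else 0) - hfun r.succ t| ≤ 1 := by
    intro k r t
    have h0 := hhnonneg r.succ t; have h1 := hhle r.succ t
    rw [abs_le]; constructor <;> split <;> simp <;> linarith
  have hFbound : ∀ a k t, |F a k t| ≤ Qf t := fun a k t => by
    simp only [hFdef]
    rw [abs_mul]
    calc |(if k = a.1.succ then (1:ℝ) else 0) - hfun a.1.succ t| * |q t a.2|
        ≤ 1 * |q t a.2| := mul_le_mul_of_nonneg_right (hdelta k a.1 t) (abs_nonneg _)
      _ = |q t a.2| := one_mul _
      _ ≤ Qf t := habs1 t a.2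
  have hFFbound : ∀ a b k t, |F a k t * F b k t| ≤ Qf t := fun a b k t => by
    have h1 := hdelta k a.1 t
    have h2 := hdelta k b.1 t
    have h3 := habs2 t a.2 b.2
    simp only [hFdef]
    rw [show ((if k = a.1.succ then (1:ℝ) else 0) - hfun a.1.succ t) * q t a.2 *
        (((if k = b.1.succ then (1:ℝ) else 0) - hfun b.1.succ t) * q t b.2)
      = (((if k = a.1.succ then (1:ℝ) else 0) - hfun a.1.succ t) *
        ((if k = b.1.succ then (1:ℝ) else 0) - hfun b.1.succ t)) * (q t a.2 * q t b.2)
      from by ring, abs_mul, abs_mul]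
    calc |(if k = a.1.succ then (1:ℝ) else 0) - hfun a.1.succ t| *
          |(if k = b.1.succ then (1:ℝ) else 0) - hfun b.1.succ t| * |q t a.2 * q t b.2|
        ≤ 1 * 1 * |q t a.2 * q t b.2| := by
          exact mul_le_mul_of_nonneg_right
            (mul_le_mul h1 h2 (abs_nonneg _) zero_le_one) (abs_nonneg _)
      _ = |q t a.2 * q t b.2| := by ring
      _ ≤ Qf t := h3
  have hhFbound : ∀ a (k k' : Fin (m + 1)) t, |hfun k' t * F a k t| ≤ Qf t := by
    intro a k k' t
    rw [abs_mul, abs_of_nonneg (hhnonneg k' t)]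
    calc hfun k' t * |F a k t| ≤ 1 * Qf t :=
        mul_le_mul (hhle k' t) (hFbound a k t) (abs_nonneg _) zero_le_one
      _ = Qf t := one_mul _
  have hhFFbound : ∀ a b (k k' : Fin (m + 1)) t, |hfun k' t * (F a k t * F b k t)| ≤ Qf t := by
    intro a b k k' t
    rw [abs_mul, abs_of_nonneg (hhnonneg k' t)]
    calc hfun k' t * |F a k t * F b k t| ≤ 1 * Qf t :=
        mul_le_mul (hhle k' t) (hFFbound a b k t) (abs_nonneg _) zero_le_one
      _ = Qf t := one_mul _
  -- pointwise algebraic identities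
  have hptzero : ∀ (a : Fin m × Fin d) (t : ℝ), ∑ k, hfun k t * F a k t = 0 := by
    intro a t
    obtain ⟨r, i⟩ := a
    have h1 : ∀ k : Fin (m + 1), hfun k t * F (r, i) k t
        = ((if k = r.succ then hfun k t else 0) - hfun k t * hfun r.succ t) * q t i := by
      intro k; simp only [hFdef]; split_ifs <;> ring
    rw [Finset.sum_congr rfl fun k _ => h1 k, ← Finset.sum_mul]
    have h2 : ∑ k, ((if k = r.succ then hfun k t else 0) - hfun k t * hfun r.succ t)
        = hfun r.succ t - (∑ k, hfun k t) * hfun r.succ t := by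
      rw [Finset.sum_sub_distrib, Finset.sum_ite_eq' Finset.univ r.succ (fun k => hfun k t),
        ← Finset.sum_mul]
      simp
    rw [h2, hhsum t]
    ring
  have hptW : ∀ (r s : Fin m) (i j : Fin d) (t : ℝ),
      ∑ k, hfun k t * (F (r, i) k t * F (s, j) k t)
        = ((if r = s then hfun r.succ t else 0) - hfun r.succ t * hfun s.succ t) *
          (q t i * q t j) := by
    intro r s i j t
    have h1 : ∀ k : Fin (m + 1), hfun k t * (F (r, i) k t * F (s, j) k t)
        = ((if k = r.succ then (if k = s.succ then hfun k t else 0) else 0)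
            - (if k = r.succ then hfun k t else 0) * hfun s.succ t
            - (if k = s.succ then hfun k t else 0) * hfun r.succ t
            + hfun k t * (hfun r.succ t * hfun s.succ t)) * (q t i * q t j) := by
      intro k; simp only [hFdef]; split_ifs <;> ring
    have h3 : (∑ k : Fin (m + 1), if k = r.succ then (if k = s.succ then hfun k t else 0) else 0)
        = if r = s then hfun r.succ t else 0 := by
      rw [Finset.sum_ite_eq' Finset.univ r.succ
        (fun k => if k = s.succ then hfun k t else 0)]
      simp [Fin.succ_inj]
    rw [Finset.sum_congr rfl fun k _ => h1 k, ← Finset.sum_mul]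
    congr 1
    rw [Finset.sum_add_distrib, Finset.sum_sub_distrib, Finset.sum_sub_distrib, h3,
      ← Finset.sum_mul, ← Finset.sum_mul, ← Finset.sum_mul,
      Finset.sum_ite_eq' Finset.univ r.succ (fun k => hfun k t),
      Finset.sum_ite_eq' Finset.univ s.succ (fun k => hfun k t), hhsum t]
    simp only [Finset.mem_univ, if_true]
    ring
  -- integral identities for B and W
  have hBkey : ∀ (k : Fin (m + 1)) (a : Fin m × Fin d),
      B k a = ∫ t, hfun k t * F a k t ∂Gbar := by
    intro k a; obtain ⟨s, i⟩ := a
    rw [hB k s i]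
    refine integral_congr_ae (Filter.Eventually.of_forall fun t => ?_)
    simp only [hFdef]; split_ifs <;> ring
  have hWkey : ∀ a b : Fin m × Fin d,
      W a b = ∑ k, ∫ t, hfun k t * (F a k t * F b k t) ∂Gbar := by
    intro a b; obtain ⟨r, i⟩ := a; obtain ⟨s, j⟩ := b
    rw [hW r s i j,
      show (fun t => ((if r = s then hfun r.succ t else 0) -
            hfun r.succ t * hfun s.succ t) * (q t i * q t j))
          = fun t => ∑ k, hfun k t * (F (r, i) k t * F (s, j) k t) from
        funext fun t => (hptW r s i j t).symm]
    exact integral_finset_sum _ fun k _ => domGbar _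
      ((hhmeas k).mul ((hFmeas (r, i) k).mul (hFmeas (s, j) k)))
      (fun t => hhFFbound (r, i) (s, j) k k t)
  have hBρ : ∀ (k : Fin (m + 1)) (a : Fin m × Fin d),
      B k a = ρ k * ∫ t, F a k t ∂(G k) := fun k a => by
    rw [hBkey k a, key k _ (hFmeas a k)]
  -- transfer to the probability space
  have Emap : ∀ (k : Fin (m + 1)) (j : Fin (n k)) (g : ℝ → ℝ), Measurable g →
      ∫ ω, g (X k j ω) ∂P = ∫ t, g t ∂(G k) := by
    intro k j g hg
    rw [← hXlaw k j, integral_map (hXmeas k j).aemeasurable hg.aestronglyMeasurable]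
  have Eint : ∀ (k : Fin (m + 1)) (j : Fin (n k)) (g : ℝ → ℝ), Measurable g →
      Integrable g (G k) → Integrable (fun ω => g (X k j ω)) P := by
    intro k j g hg hgi
    rw [← hXlaw k j] at hgi
    exact (integrable_map_measure hg.aestronglyMeasurable (hXmeas k j).aemeasurable).mp hgi
  set μm : (Fin m × Fin d) → Fin (m + 1) → ℝ := fun a k => ∫ t, F a k t ∂(G k) with hμmdef
  set m2 : (Fin m × Fin d) → (Fin m × Fin d) → Fin (m + 1) → ℝ :=
    fun a b k => ∫ t, F a k t * F b k t ∂(G k) with hm2def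
  have hZ' : ∀ (ω : Ω) (a : Fin m × Fin d),
      Z ω a = ∑ x : Σ k : Fin (m + 1), Fin (n k), F a x.1 (X x.1 x.2 ω) := by
    intro ω a
    obtain ⟨r, i⟩ := a
    rw [hZ ω r i, ← Finset.univ_sigma_univ, Finset.sum_sigma]
  have hYint : ∀ (a : Fin m × Fin d) (x : Σ k : Fin (m + 1), Fin (n k)),
      Integrable (fun ω => F a x.1 (X x.1 x.2 ω)) P := fun a x =>
    Eint x.1 x.2 _ (hFmeas a x.1) (domGk x.1 _ (hFmeas a x.1) (hFbound a x.1))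
  have hYmean : ∀ (a : Fin m × Fin d) (x : Σ k : Fin (m + 1), Fin (n k)),
      ∫ ω, F a x.1 (X x.1 x.2 ω) ∂P = μm a x.1 := fun a x =>
    Emap x.1 x.2 _ (hFmeas a x.1)
  have hEZ : ∀ a, ∫ ω, Z ω a ∂P = ∑ x : Σ k : Fin (m + 1), Fin (n k), μm a x.1 := by
    intro a
    rw [show (fun ω => Z ω a)
        = fun ω => ∑ x : Σ k : Fin (m + 1), Fin (n k), F a x.1 (X x.1 x.2 ω) from
      funext fun ω => hZ' ω a,
      integral_finset_sum _ fun x _ => hYint a x]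
    exact Finset.sum_congr rfl fun x _ => hYmean a x
  have hsum0 : ∀ a, (∑ x : Σ k : Fin (m + 1), Fin (n k), μm a x.1) = 0 := by
    intro a
    rw [← Finset.univ_sigma_univ, Finset.sum_sigma]
    have h1 : ∀ k : Fin (m + 1), (∑ _j : Fin (n k), μm a k)
        = N * ∫ t, hfun k t * F a k t ∂Gbar := by
      intro k
      rw [Finset.sum_const, Finset.card_univ, Fintype.card_fin, nsmul_eq_mul,
        key k _ (hFmeas a k), hnN k]
      ring
    rw [Finset.sum_congr rfl fun k _ => h1 k, ← Finset.mul_sum,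
      ← integral_finset_sum (f := fun k t => hfun k t * F a k t) _ (fun k _ => domGbar _ ((hhmeas k).mul (hFmeas a k))
        (fun t => hhFbound a k k t)),
      show (fun t => ∑ k, hfun k t * F a k t) = fun _ => (0 : ℝ) from
        funext fun t => hptzero a t]
    simp
  have hmean : ∀ a, ∫ ω, Z ω a ∂P = 0 := fun a => by rw [hEZ a, hsum0 a]
  -- second moments
  have hprod_ne : ∀ (a b : Fin m × Fin d) (x y : Σ k : Fin (m + 1), Fin (n k)), x ≠ y →
      ∫ ω, F a x.1 (X x.1 x.2 ω) * F b y.1 (X y.1 y.2 ω) ∂P = μm a x.1 * μm b y.1 := by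
    intro a b x y hxy
    have hind : IndepFun (X x.1 x.2) (X y.1 y.2) P := hXindep.indepFun hxy
    have h1 := (hind.comp (hFmeas a x.1) (hFmeas b y.1)).integral_fun_mul_eq_mul_integral
      ((hFmeas a x.1).comp (hXmeas x.1 x.2)).aestronglyMeasurable
      ((hFmeas b y.1).comp (hXmeas y.1 y.2)).aestronglyMeasurable
    calc ∫ ω, F a x.1 (X x.1 x.2 ω) * F b y.1 (X y.1 y.2 ω) ∂P
        = (∫ ω, (F a x.1 ∘ X x.1 x.2) ω ∂P) * ∫ ω, (F b y.1 ∘ X y.1 y.2) ω ∂P := h1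
      _ = μm a x.1 * μm b y.1 := by rw [← hYmean a x, ← hYmean b y]; rfl
  have hprod_eq : ∀ (a b : Fin m × Fin d) (x : Σ k : Fin (m + 1), Fin (n k)),
      ∫ ω, F a x.1 (X x.1 x.2 ω) * F b x.1 (X x.1 x.2 ω) ∂P = m2 a b x.1 := fun a b x =>
    Emap x.1 x.2 (fun t => F a x.1 t * F b x.1 t) ((hFmeas a x.1).mul (hFmeas b x.1))
  have hprodint : ∀ (a b : Fin m × Fin d) (x y : Σ k : Fin (m + 1), Fin (n k)),
      Integrable (fun ω => F a x.1 (X x.1 x.2 ω) * F b y.1 (X y.1 y.2 ω)) P := by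
    intro a b x y
    by_cases hxy : x = y
    · subst hxy
      exact Eint x.1 x.2 (fun t => F a x.1 t * F b x.1 t)
        ((hFmeas a x.1).mul (hFmeas b x.1))
        (domGk x.1 _ ((hFmeas a x.1).mul (hFmeas b x.1)) (hFFbound a b x.1))
    · exact ((hXindep.indepFun hxy).comp (hFmeas a x.1) (hFmeas b y.1)).integrable_mul
        (hYint a x) (hYint b y)
  have hZZ : ∀ a b, ∫ ω, Z ω a * Z ω b ∂P
      = ∑ x : Σ k : Fin (m + 1), Fin (n k), (m2 a b x.1 - μm a x.1 * μm b x.1) := by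
    intro a b
    have h0 : (fun ω => Z ω a * Z ω b) = fun ω =>
        ∑ x : Σ k : Fin (m + 1), Fin (n k), ∑ y : Σ k : Fin (m + 1), Fin (n k),
          F a x.1 (X x.1 x.2 ω) * F b y.1 (X y.1 y.2 ω) := by
      funext ω
      rw [hZ' ω a, hZ' ω b, Finset.sum_mul_sum]
    rw [h0, integral_finset_sum _ fun x _ =>
        integrable_finset_sum _ fun y _ => hprodint a b x y]
    refine Finset.sum_congr rfl fun x _ => ?_
    rw [integral_finset_sum _ fun y _ => hprodint a b x y]
    have h2 : ∀ y : Σ k : Fin (m + 1), Fin (n k),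
        ∫ ω, F a x.1 (X x.1 x.2 ω) * F b y.1 (X y.1 y.2 ω) ∂P
          = μm a x.1 * μm b y.1 +
            (if y = x then m2 a b x.1 - μm a x.1 * μm b x.1 else 0) := by
      intro y
      by_cases hy : y = x
      · subst hy; rw [if_pos rfl, hprod_eq a b y]; ring
      · rw [if_neg hy, add_zero, hprod_ne a b x y (fun h => hy h.symm)]
    rw [Finset.sum_congr rfl fun y _ => h2 y, Finset.sum_add_distrib, ← Finset.mul_sum,
      hsum0 b, Finset.sum_ite_eq' Finset.univ x
        (fun _ => m2 a b x.1 - μm a x.1 * μm b x.1)]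
    simp
  -- the covariance formula
  have hcov : ∀ a b : Fin m × Fin d,
      (∫ ω, Z ω a * Z ω b ∂P) - (∫ ω, Z ω a ∂P) * (∫ ω, Z ω b ∂P)
        = N * (W a b - ∑ k, (ρ k)⁻¹ * (B k a * B k b)) := by
    intro a b
    rw [hmean a, hmean b, mul_zero, sub_zero, hZZ a b, ← Finset.univ_sigma_univ,
      Finset.sum_sigma]
    have h1 : ∀ k : Fin (m + 1), (∑ _j : Fin (n k), (m2 a b k - μm a k * μm b k))
        = N * (∫ t, hfun k t * (F a k t * F b k t) ∂Gbar - (ρ k)⁻¹ * (B k a * B k b)) := by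
      intro k
      rw [Finset.sum_const, Finset.card_univ, Fintype.card_fin, nsmul_eq_mul, hnN k]
      have e1 : ∫ t, hfun k t * (F a k t * F b k t) ∂Gbar = ρ k * m2 a b k :=
        key k _ ((hFmeas a k).mul (hFmeas b k))
      have e4 : (ρ k)⁻¹ * (ρ k * μm a k * (ρ k * μm b k)) = ρ k * (μm a k * μm b k) := by
        rw [show ρ k * μm a k * (ρ k * μm b k) = ρ k * (ρ k * (μm a k * μm b k)) from by ring,
          inv_mul_cancel_left₀ (hρpos k).ne']
      rw [e1, hBρ k a, hBρ k b, e4]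
      ring
    rw [Finset.sum_congr rfl fun k _ => h1 k, ← Finset.mul_sum, Finset.sum_sub_distrib,
      ← hWkey a b]
  -- identities connecting B with columns of W
  have hWB : ∀ (c : Fin m × Fin d) (r : Fin m), W c (r, ⟨0, hd⟩) = B r.succ c := by
    intro c r; obtain ⟨s, i⟩ := c
    rw [hW s r i ⟨0, hd⟩, hB r.succ s i]
    refine integral_congr_ae (Filter.Eventually.of_forall fun t => ?_)
    simp only [hq1, mul_one]
    by_cases h : s = r
    · subst h; rw [if_pos rfl, if_pos rfl]
    · rw [if_neg h, if_neg fun hc => h (Fin.succ_inj.mp hc).symm]; ring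
  have hWB' : ∀ (c : Fin m × Fin d) (s : Fin m), W (s, ⟨0, hd⟩) c = B s.succ c := by
    intro c s; obtain ⟨r, i⟩ := c
    rw [hW s r ⟨0, hd⟩ i, hB s.succ r i]
    refine integral_congr_ae (Filter.Eventually.of_forall fun t => ?_)
    simp only [hq1, one_mul]
    by_cases h : s = r
    · subst h; rw [if_pos rfl, if_pos rfl]
    · rw [if_neg h, if_neg fun hc => h (Fin.succ_inj.mp hc)]
  have hBtot : ∀ c : Fin m × Fin d, ∑ k : Fin (m + 1), B k c = 0 := by
    intro c
    rw [Finset.sum_congr rfl fun k _ => hBkey k c,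
      ← integral_finset_sum (f := fun k t => hfun k t * F c k t) _ (fun k _ => domGbar _ ((hhmeas k).mul (hFmeas c k))
        (fun t => hhFbound c k k t)),
      show (fun t => ∑ k, hfun k t * F c k t) = fun _ => (0 : ℝ) from
        funext fun t => hptzero c t]
    simp
  have hB0 : ∀ c : Fin m × Fin d, B 0 c = -∑ r : Fin m, B r.succ c := by
    intro c
    have h := hBtot c
    rw [Fin.sum_univ_succ] at h
    linarith
  -- the matrix identity Σ ρ⁻¹ B Bᵀ = W S W
  have hWSW : ∀ a b : Fin m × Fin d,
      (W * S * W) a b = ∑ k, (ρ k)⁻¹ * (B k a * B k b) := by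
    intro a b
    have hsimp : (W * S * W) a b = ∑ s : Fin m, ∑ j : Fin d,
        (∑ r : Fin m, ∑ i : Fin d, W a (r, i) * S (r, i) (s, j)) * W (s, j) b := by
      rw [Matrix.mul_apply, Fintype.sum_prod_type]
      exact Finset.sum_congr rfl fun s _ => Finset.sum_congr rfl fun j _ => by
        rw [Matrix.mul_apply, Fintype.sum_prod_type]
    rw [hsimp]
    have h1 : ∀ (r s : Fin m) (i j : Fin d), W a (r, i) * S (r, i) (s, j)
        = if i = (⟨0, hd⟩ : Fin d) then
            (if j = (⟨0, hd⟩ : Fin d) then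
              W a (r, i) * ((ρ r.succ)⁻¹ * (if r = s then 1 else 0) + (ρ 0)⁻¹) else 0)
          else 0 := by
      intro r s i j; rw [hS r s i j]; split_ifs <;> ring
    simp only [h1]
    simp only [Finset.sum_ite_eq', Finset.mem_univ, if_true]
    simp only [Finset.sum_mul, ite_mul, zero_mul]
    rw [Finset.sum_congr rfl fun s _ => Finset.sum_comm]
    simp only [Finset.sum_ite_eq', Finset.mem_univ, if_true]
    simp only [hWB, hWB']
    have h2 : ∀ s r : Fin m,
        B r.succ a * ((ρ r.succ)⁻¹ * (if r = s then 1 else 0) + (ρ 0)⁻¹) * B s.succ b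
          = (if r = s then (ρ r.succ)⁻¹ * (B r.succ a * B s.succ b) else 0)
            + (ρ 0)⁻¹ * (B r.succ a * B s.succ b) := by
      intro s r; split_ifs <;> ring
    simp only [h2, Finset.sum_add_distrib]
    have h3 : ∀ s : Fin m,
        (∑ r : Fin m, if r = s then (ρ r.succ)⁻¹ * (B r.succ a * B s.succ b) else 0)
          = (ρ s.succ)⁻¹ * (B s.succ a * B s.succ b) := by
      intro s
      rw [Finset.sum_ite_eq' Finset.univ s
        (fun r => (ρ r.succ)⁻¹ * (B r.succ a * B s.succ b))]
      simp
    have h4 : ∑ s : Fin m, ∑ r : Fin m, (ρ 0)⁻¹ * (B r.succ a * B s.succ b)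
        = (ρ 0)⁻¹ * (B 0 a * B 0 b) := by
      rw [hB0 a, hB0 b]
      rw [show -(∑ r : Fin m, B r.succ a) * -(∑ s : Fin m, B s.succ b)
          = (∑ r : Fin m, B r.succ a) * ∑ s : Fin m, B s.succ b from by ring,
        Finset.sum_mul_sum, Finset.mul_sum]
      rw [Finset.sum_comm]
      refine Finset.sum_congr rfl fun s _ => ?_
      rw [Finset.mul_sum]
    rw [Finset.sum_congr rfl fun s _ => h3 s, h4,
      Fin.sum_univ_succ (f := fun k => (ρ k)⁻¹ * (B k a * B k b))]
    ring
  refine ⟨hmean, fun a b => ?_, fun _ a b => ?_⟩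
  · rw [hcov a b]
    simp only [Matrix.sub_apply, Matrix.sum_apply, Matrix.smul_apply,
      Matrix.vecMulVec_apply, smul_eq_mul]
  · rw [hcov a b]
    simp only [Matrix.sub_apply]
    rw [hWSW a b]
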